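/- Let ξ = (ξ₁,ξ₂) ∈ ℝ² and w = (w₁,w₂) ∈ ℂ² satisfy ξ₁w₁ + ξ₂w₂ = 0. Then ξ₂²|w₁|² + ξ₁²|w₂|² ≥ (1/2)(ξ₁² + ξ₂²)(|w₁|² + |w₂|²). -/

import Mathlib

/-- Pointwise Fourier-side inequality for divergence-free fields: if
`ξ₁w₁ + ξ₂w₂ = 0` then `ξ₂²|w₁|² + ξ₁²|w₂|² ≥ (1/2)(ξ₁² + ξ₂²)(|w₁|² + |w₂|²)`. -/
theorem divfree_fourier_anisotropic_lower_bound
    (ξ₁ ξ₂ : ℝ) (w₁ w₂ : ℂ)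
    (h : (ξ₁ : ℂ) * w₁ + (ξ₂ : ℂ) * w₂ = 0) :
    (1 / 2) * (ξ₁ ^ 2 + ξ₂ ^ 2) * (‖w₁‖ ^ 2 + ‖w₂‖ ^ 2)
      ≤ ξ₂ ^ 2 * ‖w₁‖ ^ 2 + ξ₁ ^ 2 * ‖w₂‖ ^ 2 := by
  have h' : (ξ₁ : ℂ) * w₁ = -((ξ₂ : ℂ) * w₂) := by linear_combination h
  have habs : ‖(ξ₁ : ℂ) * w₁‖ = ‖(ξ₂ : ℂ) * w₂‖ := by
    rw [h', norm_neg]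
  rw [norm_mul, norm_mul, Complex.norm_real, Complex.norm_real, Real.norm_eq_abs, Real.norm_eq_abs] at habs
  have key : ξ₁ ^ 2 * ‖w₁‖ ^ 2 = ξ₂ ^ 2 * ‖w₂‖ ^ 2 := by
    have := congrArg (fun x => x ^ 2) habs
    simp only [mul_pow, sq_abs] at this
    exact this
  have h1 : (0:ℝ) ≤ ‖w₁‖ ^ 2 := sq_nonneg _
  have h2 : (0:ℝ) ≤ ‖w₂‖ ^ 2 := sq_nonneg _
  rcases eq_or_lt_of_le (by positivity : (0:ℝ) ≤ ξ₁ ^ 2 + ξ₂ ^ 2) with h0 | h0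
  · have e1 : ξ₁ = 0 := by nlinarith [sq_nonneg ξ₁, sq_nonneg ξ₂]
    have e2 : ξ₂ = 0 := by nlinarith [sq_nonneg ξ₁, sq_nonneg ξ₂]
    simp [e1, e2]
  · nlinarith [mul_nonneg h1 (sq_nonneg (ξ₂ ^ 2 - ξ₁ ^ 2)),
      mul_nonneg h2 (sq_nonneg (ξ₂ ^ 2 - ξ₁ ^ 2)), key, h0]
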